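/- Let q = 3^m. For any i ∈ F_3, the number of x ∈ F_q with Tr_{F_q/F_3}(x) = i and Tr_{F_q/F_3}(x^2) = 0 is at least (q - 6√q)/9. -/

import Mathlib

open AddChar Finset

/-- The complexified quadratic character. -/
noncomputable def quadCharC (F : Type*) [Field F] [Fintype F] [DecidableEq F] : MulChar F ℂ :=
  (quadraticChar F).ringHomComp (Int.castRingHom ℂ)

lemma quadCharC_abs {F : Type*} [Field F] [Fintype F] [DecidableEq F] {a : F} (ha : a ≠ 0) :
    ‖quadCharC F a‖ = 1 := by
  rcases quadraticChar_dichotomy ha with h | h <;>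
    simp [quadCharC, MulChar.ringHomComp_apply, h]

lemma quadCharC_ne_one {F : Type*} [Field F] [Fintype F] [DecidableEq F]
    (hF : ringChar F ≠ 2) : quadCharC F ≠ 1 := by
  obtain ⟨a, ha⟩ := quadraticChar_exists_neg_one' hF
  rw [MulChar.ne_one_iff]
  refine ⟨a, ?_⟩
  simp only [quadCharC, MulChar.ringHomComp_apply, ha]
  norm_num

lemma abs_gaussSum_quadChar {F : Type*} [Field F] [Fintype F] [DecidableEq F]
    (hF : ringChar F ≠ 2) {ψ : AddChar F ℂ} (hψ : ψ.IsPrimitive) :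
    ‖gaussSum (quadCharC F) ψ‖ = Real.sqrt (Fintype.card F) := by
  have hq : (quadCharC F).IsQuadratic := (quadraticChar_isQuadratic F).comp _
  have hsq := gaussSum_sq (quadCharC_ne_one hF) hq hψ
  have habs : ‖gaussSum (quadCharC F) ψ‖ ^ 2 = Fintype.card F := by
    rw [← norm_pow, hsq, norm_mul, quadCharC_abs (by norm_num : (-1 : F) ≠ 0)]
    simp [Complex.norm_natCast]
  rw [← Real.sqrt_sq (norm_nonneg _), habs]

lemma sum_quad_eq {F : Type*} [Field F] [Fintype F] [DecidableEq F]
    (hF : ringChar F ≠ 2) {ψ : AddChar F ℂ} (hψ : ψ.IsPrimitive) {d : F} (hd : d ≠ 0) :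
    (∑ x : F, ψ (d * x ^ 2)) = gaussSum (quadCharC F) (ψ.mulShift d) := by
  have fib : (∑ x : F, ψ (d * x ^ 2)) = ∑ t : F, ∑ x ∈ univ.filter (fun x => x ^ 2 = t), ψ (d * t) := by
    rw [← Finset.sum_fiberwise univ (fun x : F => x ^ 2) (fun x => ψ (d * x ^ 2))]
    exact Finset.sum_congr rfl fun t _ => Finset.sum_congr rfl fun x hx => by
      rw [(Finset.mem_filter.mp hx).2]
  have card_eq : ∀ t : F, ((univ.filter (fun x : F => x ^ 2 = t)).card : ℂ)
      = quadCharC F t + 1 := by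
    intro t
    have h := quadraticChar_card_sqrts hF t
    have hset : ({x : F | x ^ 2 = t}.toFinset) = univ.filter (fun x : F => x ^ 2 = t) := by
      ext x; simp
    rw [hset] at h
    have : ((univ.filter (fun x : F => x ^ 2 = t)).card : ℤ) = quadraticChar F t + 1 := h
    have := congrArg (Int.cast : ℤ → ℂ) this
    push_cast at this
    rw [this]
    simp [quadCharC, MulChar.ringHomComp_apply]
  rw [fib]
  simp_rw [Finset.sum_const, nsmul_eq_mul]
  have : ∀ t : F, ((univ.filter (fun x : F => x ^ 2 = t)).card : ℂ) * ψ (d * t)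
      = quadCharC F t * ψ (d * t) + ψ (t * d) := by
    intro t
    rw [card_eq t, mul_comm t d]; ring
  rw [Finset.sum_congr rfl fun t _ => this t, Finset.sum_add_distrib,
    AddChar.sum_mulShift d hψ, if_neg hd]
  simp [gaussSum, AddChar.mulShift_apply]

lemma abs_sum_quad {F : Type*} [Field F] [Fintype F] [DecidableEq F]
    (hF : ringChar F ≠ 2) {ψ : AddChar F ℂ} (hψ : ψ.IsPrimitive) {d : F} (hd : d ≠ 0) :
    ‖∑ x : F, ψ (d * x ^ 2)‖ = Real.sqrt (Fintype.card F) := by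
  rw [sum_quad_eq hF hψ hd]
  have hu : IsUnit d := hd.isUnit
  have heq := gaussSum_mulShift (quadCharC F) ψ hu.unit
  rw [IsUnit.unit_spec] at heq
  have habs := congrArg Norm.norm heq
  rw [norm_mul] at habs
  have h1 : ‖quadCharC F d‖ = 1 := quadCharC_abs hd
  rw [h1, one_mul] at habs
  rw [habs, abs_gaussSum_quadChar hF hψ]

lemma abs_sum_quad_linear {F : Type*} [Field F] [Fintype F] [DecidableEq F]
    (hF : ringChar F ≠ 2) {ψ : AddChar F ℂ} (hψ : ψ.IsPrimitive)
    (habs : ∀ z : F, ‖ψ z‖ = 1) (c : F) {d : F} (hd : d ≠ 0) :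
    ‖∑ x : F, ψ (c * x + d * x ^ 2)‖ = Real.sqrt (Fintype.card F) := by
  have h2F : (2 : F) ≠ 0 := Ring.two_ne_zero hF
  set u : F := c / (2 * d) with hu
  have hsq : ∀ x : F, c * x + d * x ^ 2 = d * (x + u) ^ 2 + -(d * u ^ 2) := by
    intro x
    field_simp [hu]
    rw [hu]; linear_combination (-x) * div_mul_cancel₀ c (mul_ne_zero h2F hd)
  have heq : (∑ x : F, ψ (c * x + d * x ^ 2)) = (∑ y : F, ψ (d * y ^ 2)) * ψ (-(d * u ^ 2)) := by
    calc (∑ x : F, ψ (c * x + d * x ^ 2))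
        = ∑ x : F, ψ (d * (x + u) ^ 2) * ψ (-(d * u ^ 2)) := by
          refine Finset.sum_congr rfl fun x _ => ?_
          rw [hsq x, AddChar.map_add_eq_mul]
      _ = (∑ x : F, ψ (d * (x + u) ^ 2)) * ψ (-(d * u ^ 2)) := by rw [← Finset.sum_mul]
      _ = (∑ y : F, ψ (d * y ^ 2)) * ψ (-(d * u ^ 2)) := by
          congr 1
          exact Fintype.sum_equiv (Equiv.addRight u) _ _ fun x => rfl
  rw [heq, norm_mul, abs_sum_quad hF hψ hd, habs, mul_one]

theorem card_trace_conditions_ge (m q : ℕ) (hm : 0 < m) (hq : q = 3 ^ m)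
    (F : Type*) [Field F] [Fintype F] [Algebra (ZMod 3) F]
    (hF : Fintype.card F = q) (i : ZMod 3) :
    ((q : ℝ) - 6 * Real.sqrt q) / 9
      ≤ (Nat.card {x : F // Algebra.trace (ZMod 3) F x = i ∧
          Algebra.trace (ZMod 3) F (x ^ 2) = 0} : ℝ) := by
  classical
  have inj : Function.Injective (algebraMap (ZMod 3) F) := (algebraMap (ZMod 3) F).injective
  haveI : CharP F 3 := charP_of_injective_algebraMap inj 3
  have h3 : ringChar F = 3 := by rw [ringChar.eq F 3]
  have h2 : ringChar F ≠ 2 := by rw [h3]; norm_num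
  haveI : FiniteDimensional (ZMod 3) F := Module.Finite.of_finite
  -- the primitive cube root of unity and additive characters
  set ζ : ℂ := Complex.exp (2 * Real.pi * Complex.I / 3) with hζdef
  have hζ : IsPrimitiveRoot ζ 3 := Complex.isPrimitiveRoot_exp 3 (by norm_num)
  set e : AddChar (ZMod 3) ℂ := AddChar.zmodChar 3 hζ.pow_eq_one with hedef
  have he_prim : e.IsPrimitive := AddChar.zmodChar_primitive_of_primitive_root 3 hζ
  have habs_e : ∀ t : ZMod 3, ‖e t‖ = 1 := by
    intro t
    rw [hedef, AddChar.zmodChar_apply, norm_pow, hζdef, Complex.norm_exp]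
    norm_num [Complex.div_re, Complex.mul_re, Complex.mul_im]
  have he_one : ∀ t : ZMod 3, e t = 1 ↔ t = 0 := fun t =>
    AddChar.IsPrimitive.zmod_char_eq_one_iff 3 he_prim t
  set T : F → ZMod 3 := fun x => Algebra.trace (ZMod 3) F x with hTdef
  set σ : ZMod 3 → F := fun a => algebraMap (ZMod 3) F a with hσdef
  set ψ : AddChar F ℂ := e.compAddMonoidHom (Algebra.trace (ZMod 3) F).toAddMonoidHom with hψdef
  have hψx : ∀ x : F, ψ x = e (T x) := fun _ => rfl
  have hψ_ne : ψ ≠ 1 := by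
    obtain ⟨x, hx⟩ := Algebra.trace_surjective (ZMod 3) F (1 : ZMod 3)
    rw [AddChar.ne_one_iff]
    exact ⟨x, by rw [hψx, hTdef]; simp only [hx]; rw [ne_eq, he_one]; decide⟩
  have hψ_prim : ψ.IsPrimitive := AddChar.IsPrimitive.of_ne_one hψ_ne
  have habs_ψ : ∀ z : F, ‖ψ z‖ = 1 := fun z => habs_e _
  -- orthogonality
  have horth : ∀ t : ZMod 3, (∑ a : ZMod 3, e (a * t)) = if t = 0 then 3 else 0 := by
    intro t
    have h := AddChar.sum_mulShift t he_prim
    rw [ZMod.card] at h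
    rw [h]
    split_ifs <;> norm_num
  -- the counting set
  set P : F → Prop := fun x => T x = i ∧ T (x ^ 2) = 0 with hPdef
  set N : ℕ := (univ.filter P).card with hNdef
  have hNcard : Nat.card {x : F // P x} = N := by
    rw [Nat.card_eq_fintype_card, Fintype.card_subtype]
  -- inner character sums
  set S : ZMod 3 → ZMod 3 → ℂ := fun a b => ∑ x : F, ψ (σ a * x + σ b * x ^ 2) with hSdef
  -- per-term identity
  have hterm : ∀ (x : F) (a b : ZMod 3),
      e (a * (T x - i)) * e (b * T (x ^ 2)) = e (-(a * i)) * ψ (σ a * x + σ b * x ^ 2) := by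
    intro x a b
    have hTa : Algebra.trace (ZMod 3) F (algebraMap (ZMod 3) F a * x)
        = a * Algebra.trace (ZMod 3) F x := by
      rw [← Algebra.smul_def, map_smul, smul_eq_mul]
    have hTb : Algebra.trace (ZMod 3) F (algebraMap (ZMod 3) F b * x ^ 2)
        = b * Algebra.trace (ZMod 3) F (x ^ 2) := by
      rw [← Algebra.smul_def, map_smul, smul_eq_mul]
    have h1 : a * (T x - i) = a * T x + -(a * i) := by ring
    rw [h1, AddChar.map_add_eq_mul, hψx]
    have h2 : T (σ a * x + σ b * x ^ 2) = a * T x + b * T (x ^ 2) := by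
      show Algebra.trace (ZMod 3) F (algebraMap (ZMod 3) F a * x + algebraMap (ZMod 3) F b * x ^ 2)
        = a * Algebra.trace (ZMod 3) F x + b * Algebra.trace (ZMod 3) F (x ^ 2)
      rw [map_add, hTa, hTb]
    rw [h2, AddChar.map_add_eq_mul]
    ring
  -- the key identity
  have key : (9 : ℂ) * N = ∑ a : ZMod 3, ∑ b : ZMod 3, e (-(a * i)) * S a b := by
    have step1 : (9 : ℂ) * N
        = ∑ x : F, (if T x - i = 0 then (3:ℂ) else 0) * (if T (x ^ 2) = 0 then (3:ℂ) else 0) := by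
      have : ∀ x : F, (if T x - i = 0 then (3:ℂ) else 0) * (if T (x ^ 2) = 0 then (3:ℂ) else 0)
          = if P x then (9:ℂ) else 0 := by
        intro x
        by_cases hA : T x = i <;> by_cases hB : T (x ^ 2) = 0 <;>
          simp [hPdef, sub_eq_zero, hA, hB] <;> norm_num
      rw [Finset.sum_congr rfl fun x _ => this x, Finset.sum_ite, Finset.sum_const,
        Finset.sum_const_zero, add_zero, nsmul_eq_mul]
      norm_num [hNdef, mul_comm]
    rw [step1]
    simp only [← horth]
    have step2 : ∀ x : F, (∑ a : ZMod 3, e (a * (T x - i))) * (∑ b : ZMod 3, e (b * T (x ^ 2)))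
        = ∑ a : ZMod 3, ∑ b : ZMod 3, e (-(a * i)) * ψ (σ a * x + σ b * x ^ 2) := by
      intro x
      rw [Finset.sum_mul_sum]
      exact Finset.sum_congr rfl fun a _ => Finset.sum_congr rfl fun b _ => hterm x a b
    rw [Finset.sum_congr rfl fun x _ => step2 x]
    rw [Finset.sum_comm]
    refine Finset.sum_congr rfl fun a _ => ?_
    rw [Finset.sum_comm]
    refine Finset.sum_congr rfl fun b _ => ?_
    rw [hSdef, Finset.mul_sum]
  -- bounds on S
  have hS00 : S 0 0 = (q : ℂ) := by
    show (∑ x : F, ψ (σ 0 * x + σ 0 * x ^ 2)) = (q : ℂ)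
    have : ∀ x : F, ψ (σ 0 * x + σ 0 * x ^ 2) = 1 := by
      intro x
      rw [hσdef]
      simp
    rw [Finset.sum_congr rfl fun x _ => this x, Finset.sum_const, Finset.card_univ, hF]
    simp
  have hσ_ne : ∀ a : ZMod 3, a ≠ 0 → σ a ≠ 0 := by
    intro a ha h
    exact ha (inj (by rw [hσdef] at h; simpa using h))
  have hSa0 : ∀ a : ZMod 3, a ≠ 0 → S a 0 = 0 := by
    intro a ha
    show (∑ x : F, ψ (σ a * x + σ 0 * x ^ 2)) = 0
    have : ∀ x : F, ψ (σ a * x + σ 0 * x ^ 2) = ψ (x * σ a) := by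
      intro x
      rw [hσdef]
      simp [mul_comm]
    rw [Finset.sum_congr rfl fun x _ => this x, AddChar.sum_mulShift _ hψ_prim,
      if_neg (hσ_ne a ha)]
    norm_num
  have hSb : ∀ a b : ZMod 3, b ≠ 0 → ‖S a b‖ = Real.sqrt q := by
    intro a b hb
    have h := abs_sum_quad_linear h2 hψ_prim habs_ψ (σ a) (hσ_ne b hb)
    rw [hF] at h
    exact h
  -- assembling
  set g : ZMod 3 × ZMod 3 → ℂ := fun p => e (-(p.1 * i)) * S p.1 p.2 with hgdef
  have key' : (9 : ℂ) * N = ∑ p : ZMod 3 × ZMod 3, g p := by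
    rw [key, Fintype.sum_prod_type]
  have hg00 : g (0, 0) = (q : ℂ) := by
    show e (-(0 * i)) * S 0 0 = (q : ℂ)
    rw [hS00]
    simp
  have hE : ∑ p ∈ univ.erase ((0,0) : ZMod 3 × ZMod 3), g p = 9 * N - q := by
    have h := Finset.add_sum_erase univ g (Finset.mem_univ ((0,0) : ZMod 3 × ZMod 3))
    rw [hg00] at h
    rw [← key'] at h
    linear_combination h
  have hbound : ∀ p ∈ univ.erase ((0,0) : ZMod 3 × ZMod 3),
      ‖g p‖ ≤ (if p.2 = 0 then 0 else Real.sqrt q) := by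
    intro p hp
    rcases p with ⟨a, b⟩
    simp only [Finset.mem_erase, Finset.mem_univ, and_true] at hp
    by_cases hb : b = 0
    · subst hb
      have ha : a ≠ 0 := by simpa [Prod.ext_iff] using hp
      rw [if_pos rfl]
      show ‖e (-(a * i)) * S a 0‖ ≤ 0
      rw [hSa0 a ha, mul_zero, norm_zero]
    · rw [if_neg hb]
      show ‖e (-(a * i)) * S a b‖ ≤ _
      rw [norm_mul, habs_e, one_mul, hSb a b hb]
  have hsix : (∑ p ∈ univ.erase ((0,0) : ZMod 3 × ZMod 3),
      (if p.2 = 0 then (0:ℝ) else Real.sqrt q)) = 6 * Real.sqrt q := by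
    rw [Finset.sum_erase _ (by simp)]
    rw [Fintype.sum_prod_type]
    have hone : (∑ b : ZMod 3, if b = 0 then (0:ℝ) else Real.sqrt q) = 2 * Real.sqrt q := by
      rw [Finset.sum_ite, Finset.sum_const, Finset.sum_const, smul_zero, zero_add,
        show (univ.filter (fun b : ZMod 3 => ¬ b = 0)).card = 2 from by decide,
        nsmul_eq_mul]
      push_cast
      ring
    simp only [hone]
    rw [Finset.sum_const, Finset.card_univ, ZMod.card, nsmul_eq_mul]
    push_cast
    ring
  have habs_sum : ‖∑ p ∈ univ.erase ((0,0) : ZMod 3 × ZMod 3), g p‖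
      ≤ 6 * Real.sqrt q := by
    calc ‖∑ p ∈ univ.erase ((0,0) : ZMod 3 × ZMod 3), g p‖
        ≤ ∑ p ∈ univ.erase ((0,0) : ZMod 3 × ZMod 3), ‖g p‖ :=
          norm_sum_le _ _
      _ ≤ ∑ p ∈ univ.erase ((0,0) : ZMod 3 × ZMod 3), (if p.2 = 0 then (0:ℝ) else Real.sqrt q) :=
          Finset.sum_le_sum hbound
      _ = 6 * Real.sqrt q := hsix
  have hreal : ((9 * (N:ℝ) - q : ℝ) : ℂ) = ∑ p ∈ univ.erase ((0,0) : ZMod 3 × ZMod 3), g p := by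
    rw [hE]
    push_cast
    ring
  have habs' : |9 * (N:ℝ) - q| ≤ 6 * Real.sqrt q := by
    rw [← Real.norm_eq_abs, ← Complex.norm_real, hreal]
    exact habs_sum
  have hNle : (q:ℝ) - 6 * Real.sqrt q ≤ 9 * N := by
    have h := abs_le.mp habs'
    linarith [h.1]
  have hNc : Nat.card {x : F // Algebra.trace (ZMod 3) F x = i ∧
      Algebra.trace (ZMod 3) F (x ^ 2) = 0} = N := hNcard
  rw [hNc]
  linarith
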